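/- A real algebraic unit α > 1 of degree 3 over ℚ is bi-Perron if and only if it is a Pisot number. -/

import Mathlib

open Polynomial

lemma coeff0_unit (α : ℝ) (h0 : α ≠ 0) (hint : IsIntegral ℤ α) (hunit : IsIntegral ℤ α⁻¹)
    (hdeg : (minpoly ℚ α).natDegree = 3) :
    (minpoly ℚ α).coeff 0 = 1 ∨ (minpoly ℚ α).coeff 0 = -1 := by
  have hm : minpoly ℚ α = (minpoly ℤ α).map (algebraMap ℤ ℚ) :=
    minpoly.isIntegrallyClosed_eq_field_fractions ℚ ℝ hint
  set m := minpoly ℤ α with hmdef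
  set m' := minpoly ℤ α⁻¹ with hm'def
  have hmmonic : m.Monic := minpoly.monic hint
  have hm'monic : m'.Monic := minpoly.monic hunit
  have hmd : m.natDegree = 3 := by
    rw [hm, natDegree_map_eq_of_injective (algebraMap ℤ ℚ).injective_int] at hdeg
    exact hdeg
  letI : Invertible α := invertibleOfNonzero h0
  have hrev : Polynomial.aeval α⁻¹ m.reverse = 0 := by
    have := (eval₂_reverse_eq_zero_iff (algebraMap ℤ ℝ) α m).mpr ?_
    · rw [aeval_def, ← invOf_eq_inv α]; exact this
    · have := minpoly.aeval ℤ α; rwa [aeval_def] at this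
  have h0i : α⁻¹ ≠ 0 := inv_ne_zero h0
  letI : Invertible α⁻¹ := invertibleOfNonzero h0i
  have hrev' : Polynomial.aeval α m'.reverse = 0 := by
    have := (eval₂_reverse_eq_zero_iff (algebraMap ℤ ℝ) α⁻¹ m').mpr ?_
    · rw [aeval_def, ← inv_inv α, ← invOf_eq_inv α⁻¹]; exact this
    · have := minpoly.aeval ℤ α⁻¹; rwa [aeval_def] at this
  have hdvd : m' ∣ m.reverse := minpoly.isIntegrallyClosed_dvd hunit hrev
  have hdvd' : m ∣ m'.reverse := minpoly.isIntegrallyClosed_dvd hint hrev'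
  have hmne : m ≠ 0 := hmmonic.ne_zero
  have hm'ne : m' ≠ 0 := hm'monic.ne_zero
  have hrne : m.reverse ≠ 0 := by rwa [Ne, reverse_eq_zero]
  have hr'ne : m'.reverse ≠ 0 := by rwa [Ne, reverse_eq_zero]
  have hm'd : m'.natDegree = 3 := by
    have h1 : m'.natDegree ≤ 3 :=
      le_trans (natDegree_le_of_dvd hdvd hrne) (le_trans m.reverse_natDegree_le (le_of_eq hmd))
    have h2 : 3 ≤ m'.natDegree := by
      calc 3 = m.natDegree := hmd.symm
        _ ≤ m'.reverse.natDegree := natDegree_le_of_dvd hdvd' hr'ne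
        _ ≤ m'.natDegree := m'.reverse_natDegree_le
    omega
  obtain ⟨r, hr⟩ := hdvd
  have hrne0 : r ≠ 0 := by rintro rfl; rw [mul_zero] at hr; exact hrne hr
  have hdr : r.natDegree = 0 := by
    have := natDegree_mul hm'ne hrne0
    rw [← hr] at this
    have h1 : m.reverse.natDegree ≤ 3 := le_trans m.reverse_natDegree_le (le_of_eq hmd)
    omega
  have hrC : r = C (r.coeff 0) := eq_C_of_natDegree_eq_zero hdr
  set t := r.coeff 0 with htdef
  have hc0 : m'.coeff 0 * t = 1 := by
    have := congrArg (fun q => q.coeff 0) hr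
    simpa [coeff_zero_reverse, hmmonic.leadingCoeff, hrC, coeff_mul_C] using this.symm
  have hc3 : m.coeff 0 = t := by
    have := congrArg (fun q => q.coeff 3) hr
    simp only [hrC, coeff_mul_C] at this
    rw [coeff_reverse, hmd] at this
    rw [show revAt 3 3 = 0 from by simp [revAt_le]] at this
    have hlead : m'.coeff 3 = 1 := by
      have := hm'monic.leadingCoeff; rwa [leadingCoeff, hm'd] at this
    rw [hlead, one_mul] at this
    exact this
  have ht : t = 1 ∨ t = -1 := by
    have : IsUnit t := isUnit_iff_exists_inv.mpr ⟨m'.coeff 0, by linarith [hc0]⟩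
    exact Int.isUnit_iff.mp this
  rw [hm, coeff_map, hc3]
  rcases ht with h | h <;> simp [h]

lemma no_rat_root (α : ℝ) (hQ : IsIntegral ℚ α)
    (hdeg : (minpoly ℚ α).natDegree = 3) (r : ℚ) :
    (minpoly ℚ α).eval r ≠ 0 := by
  intro h
  have hdvd : (X - C r) ∣ minpoly ℚ α := dvd_iff_isRoot.mpr h
  obtain ⟨q, hq⟩ := hdvd
  rcases (minpoly.irreducible hQ).isUnit_or_isUnit hq with hu | hu
  · have := natDegree_eq_zero_of_isUnit hu
    rw [natDegree_X_sub_C] at this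
    exact one_ne_zero this
  · have hqd : q.natDegree = 0 := natDegree_eq_zero_of_isUnit hu
    have hq0 : q ≠ 0 := by rintro rfl; simp at hq; exact (minpoly.ne_zero hQ) hq
    have := congrArg natDegree hq
    rw [natDegree_mul (X_sub_C_ne_zero r) hq0, natDegree_X_sub_C, hqd, hdeg] at this
    omega

theorem stmt6 (α : ℝ) (h1 : 1 < α) (hint : IsIntegral ℤ α) (hunit : IsIntegral ℤ α⁻¹)
    (hdeg : (minpoly ℚ α).natDegree = 3) :
    (∀ β : ℂ, (Polynomial.aeval β) (minpoly ℚ α) = 0 → β ≠ (α : ℂ) →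
        α⁻¹ ≤ ‖β‖ ∧ ‖β‖ < α) ↔
    (∀ β : ℂ, (Polynomial.aeval β) (minpoly ℚ α) = 0 → β ≠ (α : ℂ) → ‖β‖ < 1) := by
  have hαpos : (0:ℝ) < α := lt_trans zero_lt_one h1
  have h0 : α ≠ 0 := ne_of_gt hαpos
  have hc := coeff0_unit α h0 hint hunit hdeg
  have hQ : IsIntegral ℚ α := hint.tower_top
  set p := minpoly ℚ α with hpdef
  have hpmonic : p.Monic := minpoly.monic hQ
  set P := p.map (algebraMap ℚ ℂ) with hPdef
  have hPmonic : P.Monic := hpmonic.map _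
  have hPd : P.natDegree = 3 := by
    rw [hPdef, natDegree_map_eq_of_injective (algebraMap ℚ ℂ).injective]; exact hdeg
  have hPsplits : P.Splits :=
    IsAlgClosed.splits P
  have hcard : Multiset.card P.roots = 3 := by
    rw [← hPd]; exact (splits_iff_card_roots).mp hPsplits
  have hprodc : P.coeff 0 = (-1)^3 * P.roots.prod := by
    rw [← hPd]; exact hPsplits.coeff_zero_eq_prod_roots_of_monic hPmonic
  have hnormc : ‖P.roots.prod‖ = 1 := by
    have hn0 : ‖P.coeff 0‖ = 1 := by
      rw [hPdef, coeff_map]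
      rcases hc with h | h <;> rw [h] <;> simp
    rw [hprodc] at hn0; simpa using hn0
  have hmem : ∀ β : ℂ, (Polynomial.aeval β) p = 0 ↔ β ∈ P.roots := by
    intro β
    rw [mem_roots hPmonic.ne_zero, IsRoot, hPdef, eval_map, ← aeval_def]
  have haroot : (Polynomial.aeval (α:ℂ)) p = 0 := by
    have h := minpoly.aeval ℚ α
    have h2 : (Polynomial.aeval ((algebraMap ℝ ℂ) α)) p = algebraMap ℝ ℂ ((Polynomial.aeval α) p) :=
      aeval_algebraMap_apply ℂ α p
    rw [← hpdef] at h
    rw [h, map_zero] at h2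
    simpa using h2
  have hnodup : P.roots.Nodup :=
    nodup_roots ((minpoly.irreducible hQ).separable.map (f := algebraMap ℚ ℂ))
  have key : ∀ β : ℂ, β ∈ P.roots → β ≠ (α:ℂ) → ∃ γ, γ ∈ P.roots ∧ γ ≠ (α:ℂ) ∧ γ ≠ β ∧
      ‖β‖ * ‖γ‖ = α⁻¹ ∧ ∀ δ ∈ P.roots, δ = (α:ℂ) ∨ δ = β ∨ δ = γ := by
    intro β hβ hβa
    have ha : (α:ℂ) ∈ P.roots := (hmem _).mp haroot
    have hβ' : β ∈ P.roots.erase (α:ℂ) := Multiset.mem_erase_of_ne hβa |>.mpr hβ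
    obtain ⟨γ, hγ⟩ : ∃ γ, (P.roots.erase (α:ℂ)).erase β = {γ} := by
      apply Multiset.card_eq_one.mp
      rw [Multiset.card_erase_of_mem hβ', Multiset.card_erase_of_mem ha, hcard]
      rfl
    have hdecomp : P.roots = (α:ℂ) ::ₘ β ::ₘ {γ} := by
      rw [← hγ, Multiset.cons_erase hβ', Multiset.cons_erase ha]
    have hγmem : γ ∈ P.roots := by rw [hdecomp]; simp
    have hne : γ ≠ (α:ℂ) ∧ γ ≠ β := by
      have hnd := hnodup
      rw [hdecomp] at hnd
      simp only [Multiset.nodup_cons, Multiset.mem_cons, Multiset.mem_singleton] at hnd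
      refine ⟨fun h => hnd.1 (Or.inr h.symm), fun h => hnd.2.1 h.symm⟩
    refine ⟨γ, hγmem, hne.1, hne.2, ?_, ?_⟩
    · have hprodr : P.roots.prod = (α:ℂ) * (β * γ) := by rw [hdecomp]; simp
      have hn : ‖(α:ℂ)‖ * (‖β‖ * ‖γ‖) = 1 := by
        rw [← norm_mul, ← norm_mul, ← hprodr, hnormc]
      rw [Complex.norm_real, Real.norm_eq_abs, abs_of_pos hαpos] at hn
      rw [inv_eq_one_div, eq_div_iff (ne_of_gt hαpos)]
      linarith
    · intro δ hδ
      rw [hdecomp] at hδ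
      simpa using hδ
  have hconj : ∀ β : ℂ, (Polynomial.aeval β) p = 0 →
      (Polynomial.aeval ((starRingEnd ℂ) β)) p = 0 := by
    intro β hβ
    have h2 : (starRingEnd ℂ) ((Polynomial.aeval β) p) =
        eval₂ ((starRingEnd ℂ).comp (algebraMap ℚ ℂ)) ((starRingEnd ℂ) β) p := by
      rw [aeval_def, hom_eval₂]
    have h3 : (starRingEnd ℂ).comp (algebraMap ℚ ℂ) = algebraMap ℚ ℂ := by
      ext q
      simp [eq_ratCast ((starRingEnd ℂ).comp (algebraMap ℚ ℂ)) q, eq_ratCast (algebraMap ℚ ℂ) q]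
    rw [hβ, map_zero, h3, ← aeval_def] at h2
    exact h2.symm
  constructor
  · -- bi-Perron → Pisot
    intro H β hβev hβa
    have hβ := (hmem β).mp hβev
    obtain ⟨γ, hγr, hγa, hγβ, hprod2, hall⟩ := key β hβ hβa
    by_contra hge
    push_neg at hge
    have hγev : (Polynomial.aeval γ) p = 0 := (hmem γ).mpr hγr
    have hγb := H γ hγev hγa
    have hβnn : (0:ℝ) ≤ ‖β‖ := norm_nonneg β
    have hγeq : ‖γ‖ = α⁻¹ := by
      have hle : ‖γ‖ ≤ α⁻¹ := by
        nlinarith [hγb.1, inv_pos.mpr hαpos]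
      exact le_antisymm hle hγb.1
    have hβeq : ‖β‖ = 1 := by
      rw [hγeq] at hprod2
      have hinv : α⁻¹ ≠ 0 := ne_of_gt (inv_pos.mpr hαpos)
      field_simp at hprod2
      simpa using hprod2
    by_cases him : β.im = 0
    · -- β is real, hence β = ±1, contradicting irreducibility
      have hre : β = ((β.re : ℝ) : ℂ) := by
        apply Complex.ext <;> simp [him]
      have habs : |β.re| = 1 := by
        rw [hre] at hβeq
        rwa [Complex.norm_real, Real.norm_eq_abs] at hβeq
      have hrat : ∃ r : ℚ, β = ((r : ℚ) : ℂ) := by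
        rcases abs_eq (by norm_num : (0:ℝ) ≤ 1) |>.mp habs with h | h
        · exact ⟨1, by rw [hre, h]; norm_num⟩
        · exact ⟨-1, by rw [hre, h]; norm_num⟩
      obtain ⟨r, hr⟩ := hrat
      have : p.eval r = 0 := by
        have h4 : (Polynomial.aeval ((algebraMap ℚ ℂ) r)) p = algebraMap ℚ ℂ (p.eval r) := by
          rw [aeval_algebraMap_apply, aeval_def, eval]
          simp [aeval_def, eval₂_at_apply]
        rw [show (algebraMap ℚ ℂ) r = β from by rw [hr]; simp, hβev] at h4
        exact_mod_cast ((algebraMap ℚ ℂ).injective (h4.symm.trans (map_zero _).symm))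
      exact no_rat_root α hQ hdeg r this
    · -- β is nonreal; its conjugate must be γ
      have hcβ : (Polynomial.aeval ((starRingEnd ℂ) β)) p = 0 := hconj β hβev
      have hcmem : (starRingEnd ℂ) β ∈ P.roots := (hmem _).mp hcβ
      have hca : (starRingEnd ℂ) β ≠ (α:ℂ) := by
        intro h
        have := congrArg Complex.im h
        simp at this
        exact him this
      have hcb : (starRingEnd ℂ) β ≠ β := by
        intro h
        exact him (Complex.conj_eq_iff_im.mp h)
      rcases hall _ hcmem with h | h | h
      · exact hca h
      · exact hcb h
      · have : ‖γ‖ = 1 := by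
          rw [← h]
          simpa using hβeq
        rw [hγeq] at this
        have : α = 1 := by
          field_simp at this
          linarith
        linarith
  · -- Pisot → bi-Perron
    intro H β hβev hβa
    have hβ := (hmem β).mp hβev
    obtain ⟨γ, hγr, hγa, hγβ, hprod2, -⟩ := key β hβ hβa
    have hγlt := H γ ((hmem γ).mpr hγr) hγa
    have hβlt := H β hβev hβa
    refine ⟨?_, lt_trans hβlt h1⟩
    nlinarith [norm_nonneg β, norm_nonneg γ, inv_pos.mpr hαpos]
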